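/- Let (G, ·, ∘) be a skew brace. Then the category of modules over (G, ·, ∘) — triples (M, ▷, ▶) where (M, ▷) is a G_·-action, (M, ▶) is a G_∘-action, and g ▶ (h ▷ m) = ((g ∘ h) · g⁻¹) ▷ (g ▶ m) for all g, h ∈ G, m ∈ M — is isomorphic to the category of modules (G-sets with action) over the semidirect product group G_· ⋉ G_∘. -/

import Mathlib

open CategoryTheory

universe u

/-- A skew brace: a set `G` with two group structures `(G, ·)` (given by the `Group G`
instance) and `(G, ∘)` (given by `circ`, `oneo`, `invo`) such that
`a ∘ (b · c) = (a ∘ b) · a⁻¹ · (a ∘ c)`. -/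
structure SkewBrace (G : Type u) [Group G] where
  circ : G → G → G
  oneo : G
  invo : G → G
  circ_assoc : ∀ a b c, circ (circ a b) c = circ a (circ b c)
  oneo_circ : ∀ a, circ oneo a = a
  circ_oneo : ∀ a, circ a oneo = a
  invo_circ : ∀ a, circ (invo a) a = oneo
  compat : ∀ a b c, circ a (b * c) = circ a b * a⁻¹ * circ a c

variable {G : Type u} [Group G] (B : SkewBrace G)

/-- A module over the skew brace `(G, ·, ∘)`: a set `M` with an action `▷` of `(G, ·)`,
an action `▶` of `(G, ∘)` and the compatibility
`g ▶ (h ▷ m) = ((g ∘ h) · g⁻¹) ▷ (g ▶ m)`. -/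
structure SkewBraceMod where
  M : Type u
  dact : G → M → M
  tact : G → M → M
  dact_one : ∀ m, dact 1 m = m
  dact_mul : ∀ g h m, dact (g * h) m = dact g (dact h m)
  tact_one : ∀ m, tact B.oneo m = m
  tact_mul : ∀ g h m, tact (B.circ g h) m = tact g (tact h m)
  compat : ∀ g h m, tact g (dact h m) = dact (B.circ g h * g⁻¹) (tact g m)

instance : Category (SkewBraceMod B) where
  Hom X Y := {f : X.M → Y.M //
    (∀ g m, f (X.dact g m) = Y.dact g (f m)) ∧ (∀ g m, f (X.tact g m) = Y.tact g (f m))}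
  id X := ⟨id, fun _ _ => rfl, fun _ _ => rfl⟩
  comp {X Y Z} f g := ⟨g.1 ∘ f.1, fun a m => by simp [f.2.1, g.2.1],
    fun a m => by simp [f.2.2, g.2.2]⟩
  id_comp f := Subtype.ext rfl
  comp_id f := Subtype.ext rfl
  assoc f g h := Subtype.ext rfl

/-- A module (`G`-set) over the semidirect product group `G_· ⋉ G_∘`, whose underlying set
is `G × G` with multiplication `(a, g)(b, h) = (a · (g⁻¹ · (g ∘ b)), g ∘ h)` and unit
`(1, 1_∘)`. -/
structure SemidirectMod where
  M : Type u
  act : G × G → M → M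
  act_one : ∀ m, act (1, B.oneo) m = m
  act_mul : ∀ a g b h m,
    act (a * (g⁻¹ * B.circ g b), B.circ g h) m = act (a, g) (act (b, h) m)

instance : Category (SemidirectMod B) where
  Hom X Y := {f : X.M → Y.M // ∀ p m, f (X.act p m) = Y.act p (f m)}
  id X := ⟨id, fun _ _ => rfl⟩
  comp {X Y Z} f g := ⟨g.1 ∘ f.1, fun p m => by simp [f.2, g.2]⟩
  id_comp f := Subtype.ext rfl
  comp_id f := Subtype.ext rfl
  assoc f g h := Subtype.ext rfl


namespace SkewBraceProof

variable {G : Type u} [Group G] (B : SkewBrace G)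

lemma circ_one (a : G) : B.circ a 1 = a := by
  have h := B.compat a 1 1
  rw [one_mul] at h
  have h2 : (1 : G) * B.circ a 1 = (B.circ a 1 * a⁻¹) * B.circ a 1 := by
    rw [one_mul]; exact h
  have h3 := mul_right_cancel h2
  exact mul_inv_eq_one.mp h3.symm

lemma oneo_eq_one : B.oneo = 1 := by
  have h1 := circ_one B B.oneo
  have h2 := B.oneo_circ 1
  rw [h2] at h1; exact h1.symm

lemma circ_one_left (a : G) : B.circ 1 a = a := by
  rw [← oneo_eq_one B]; exact B.oneo_circ a

lemma circ_inv (g b h : G) :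
    B.circ g b * (B.circ g h)⁻¹ = B.circ g (b * h⁻¹) * g⁻¹ := by
  have h1 := B.compat g (b * h⁻¹) h
  rw [inv_mul_cancel_right] at h1
  rw [h1]; group

variable {B}

lemma tact_one' (X : SkewBraceMod B) (m : X.M) : X.tact 1 m = m := by
  rw [← oneo_eq_one B]; exact X.tact_one m

/-- Forward functor on objects. -/
def Fobj (X : SkewBraceMod B) : SemidirectMod B where
  M := X.M
  act := fun p m => X.dact (p.1 * p.2⁻¹) (X.tact p.2 m)
  act_one := fun m => by
    simp only [oneo_eq_one B, inv_one, mul_one, tact_one', X.dact_one]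
  act_mul := fun a g b h m => by
    simp only
    rw [X.compat g (b * h⁻¹) (X.tact h m), ← X.dact_mul, ← X.tact_mul]
    congr 1
    rw [← circ_inv B g b h]
    group

/-- Backward functor on objects. -/
def Gobj (Y : SemidirectMod B) : SkewBraceMod B where
  M := Y.M
  dact := fun a m => Y.act (a, 1) m
  tact := fun g m => Y.act (g, g) m
  dact_one := fun m => by
    have := Y.act_one m
    rwa [oneo_eq_one B] at this
  dact_mul := fun g h m => by
    have := Y.act_mul g 1 h 1 m
    rwa [circ_one_left B, circ_one_left B, inv_one, one_mul] at this
  tact_one := fun m => by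
    rw [oneo_eq_one B]
    have := Y.act_one m
    rwa [oneo_eq_one B] at this
  tact_mul := fun g h m => by
    have := Y.act_mul g g h h m
    rwa [mul_inv_cancel_left] at this
  compat := fun g h m => by
    have h1 := Y.act_mul g g h 1 m
    rw [circ_one B, mul_inv_cancel_left] at h1
    have h2 := Y.act_mul (B.circ g h * g⁻¹) 1 g g m
    simp only [circ_one_left B, inv_one, one_mul, inv_mul_cancel_right] at h2
    show Y.act (g, g) (Y.act (h, 1) m) = Y.act (B.circ g h * g⁻¹, 1) (Y.act (g, g) m)
    exact h1.symm.trans h2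

def F : SkewBraceMod B ⥤ SemidirectMod B where
  obj := Fobj
  map {X Y} f := ⟨f.1, fun p m => by
    show f.1 (X.dact _ (X.tact _ m)) = Y.dact _ (Y.tact _ (f.1 m))
    exact (f.2.1 _ _).trans (congrArg _ (f.2.2 _ _))⟩
  map_id X := Subtype.ext rfl
  map_comp f g := Subtype.ext rfl

def Gf : SemidirectMod B ⥤ SkewBraceMod B where
  obj := Gobj
  map {X Y} f := ⟨f.1, fun g m => f.2 (g, 1) m, fun g m => f.2 (g, g) m⟩
  map_id X := Subtype.ext rfl
  map_comp f g := Subtype.ext rfl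

lemma SkewBraceMod.ext' {X Y : SkewBraceMod B} (hM : X.M = Y.M)
    (hd : HEq X.dact Y.dact) (ht : HEq X.tact Y.tact) : X = Y := by
  cases X; cases Y
  cases hM; cases hd; cases ht; rfl

lemma SemidirectMod.ext' {X Y : SemidirectMod B} (hM : X.M = Y.M)
    (ha : HEq X.act Y.act) : X = Y := by
  cases X; cases Y; cases hM; cases ha; rfl

lemma eqToHom_val₁ {X Y : SkewBraceMod B} (h : X = Y) (m : X.M) :
    (eqToHom h).1 m = cast (congrArg SkewBraceMod.M h) m := by subst h; rfl

lemma eqToHom_val₂ {X Y : SemidirectMod B} (h : X = Y) (m : X.M) :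
    (eqToHom h).1 m = cast (congrArg SemidirectMod.M h) m := by subst h; rfl

lemma cast_self {α : Type u} (h : α = α) (a : α) : cast h a = a := cast_eq h a

lemma GF_obj (X : SkewBraceMod B) : Gobj (Fobj X) = X := by
  refine SkewBraceMod.ext' rfl ?_ ?_
  · apply heq_of_eq
    funext a m
    change X.M at m
    show X.dact (a * (1:G)⁻¹) (X.tact 1 m) = X.dact a m
    rw [tact_one', inv_one, mul_one]
  · apply heq_of_eq
    funext g m
    show X.dact (g * g⁻¹) (X.tact g m) = X.tact g m
    rw [mul_inv_cancel, X.dact_one]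

lemma FG_obj (Y : SemidirectMod B) : Fobj (Gobj Y) = Y := by
  refine SemidirectMod.ext' rfl ?_
  apply heq_of_eq
  funext p m
  obtain ⟨a, g⟩ := p
  show Y.act (a * g⁻¹, 1) (Y.act (g, g) m) = Y.act (a, g) m
  have := Y.act_mul (a * g⁻¹) 1 g g m
  simp only [circ_one_left B, inv_one, one_mul] at this
  rw [← this, inv_mul_cancel_right]

end SkewBraceProof

/-- The category of modules over a skew brace `(G, ·, ∘)` is isomorphic to the category of
modules over the semidirect product group `G_· ⋉ G_∘`. -/
theorem skewBraceMod_iso_semidirectMod :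
    ∃ (F : SkewBraceMod B ⥤ SemidirectMod B) (Gf : SemidirectMod B ⥤ SkewBraceMod B),
      F ⋙ Gf = 𝟭 (SkewBraceMod B) ∧ Gf ⋙ F = 𝟭 (SemidirectMod B) := by
  refine ⟨SkewBraceProof.F, SkewBraceProof.Gf, ?_, ?_⟩
  · refine CategoryTheory.Functor.ext (fun X => SkewBraceProof.GF_obj X) ?_
    intro X Y f
    apply Subtype.ext
    funext m
    change X.M at m
    show f.1 m = (eqToHom (SkewBraceProof.GF_obj Y).symm).1 (f.1 ((eqToHom (SkewBraceProof.GF_obj X)).1 m))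
    have e1 := SkewBraceProof.eqToHom_val₁ (SkewBraceProof.GF_obj X) m
    have e2 := SkewBraceProof.eqToHom_val₁ (SkewBraceProof.GF_obj Y).symm (f.1 ((eqToHom (SkewBraceProof.GF_obj X)).1 m))
    exact (e2.trans (congrArg (fun x => cast (congrArg SkewBraceMod.M (SkewBraceProof.GF_obj Y).symm) (f.1 x)) e1)).symm
  · refine CategoryTheory.Functor.ext (fun Y => SkewBraceProof.FG_obj Y) ?_
    intro X Y f
    apply Subtype.ext
    funext m
    change X.M at m
    show f.1 m = (eqToHom (SkewBraceProof.FG_obj Y).symm).1 (f.1 ((eqToHom (SkewBraceProof.FG_obj X)).1 m))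
    have e1 := SkewBraceProof.eqToHom_val₂ (SkewBraceProof.FG_obj X) m
    have e2 := SkewBraceProof.eqToHom_val₂ (SkewBraceProof.FG_obj Y).symm (f.1 ((eqToHom (SkewBraceProof.FG_obj X)).1 m))
    exact (e2.trans (congrArg (fun x => cast (congrArg SemidirectMod.M (SkewBraceProof.FG_obj Y).symm) (f.1 x)) e1)).symm
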